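/- Let k be a field equipped with an involution σ that is not the identity, and let k₀ = {λ ∈ k : σ(λ) = λ} be the fixed field of σ. If k₀ is a C₁ field, then the norm map φ : kˣ → k₀ˣ, φ(λ) = λ·σ(λ), is surjective; that is, for every nonzero a ∈ k₀ there exists λ ∈ k with λ·σ(λ) = a. -/

import Mathlib

/-- A field `K` is `C₁` if every homogeneous polynomial of degree `d` in `n`
variables with `0 < d < n` has a nontrivial zero. -/
def IsC1Field (K : Type*) [Field K] : Prop :=
  ∀ (n d : ℕ) (f : MvPolynomial (Fin n) K), f.IsHomogeneous d → 0 < d → d < n →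
    ∃ x : Fin n → K, MvPolynomial.eval x f = 0 ∧ x ≠ 0

/-- The fixed subfield `k₀ = {λ | σ λ = λ}` of a field endomorphism. -/
def fixedSubfield {k : Type*} [Field k] (σ : k →+* k) : Subfield k where
  carrier := {x | σ x = x}
  mul_mem' ha hb := by simp_all [map_mul]
  one_mem' := by simp
  add_mem' ha hb := by simp_all [map_add]
  zero_mem' := by simp
  neg_mem' ha := by simp_all [map_neg]
  inv_mem' x hx := by simp_all [map_inv₀]

open MvPolynomial

/-- If the fixed field `k₀` of a non-identity involution `σ` of
`k` is a `C₁` field, then the norm map `φ : kˣ → k₀ˣ`, `φ(λ) = λ·σ(λ)`, is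
surjective: every nonzero `a ∈ k₀` is of the form `λ·σ(λ)`. -/
theorem norm_surjective_of_isC1Field_fixedSubfield
    {k : Type*} [Field k]
    (σ : k →+* k) (hσ : Function.Involutive σ)
    (hne : ∃ x : k, σ x ≠ x)
    (hC1 : IsC1Field (fixedSubfield σ))
    (a : k) (ha : a ≠ 0) (hfix : σ a = a) :
    ∃ l : k, l * σ l = a := by
  obtain ⟨t, ht⟩ := hne
  set k0 := fixedSubfield σ with hk0
  have hmem : ∀ c : k, σ c = c → c ∈ k0 := fun c h => h
  set S : k0 := ⟨t + σ t, hmem _ (by rw [map_add, hσ t]; ring)⟩ with hS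
  set N : k0 := ⟨t * σ t, hmem _ (by rw [map_mul, hσ t]; ring)⟩ with hN
  set A : k0 := ⟨a, hmem _ hfix⟩ with hA
  set f : MvPolynomial (Fin 3) k0 :=
    X 0 ^ 2 + C S * (X 0 * X 1) + C N * X 1 ^ 2 - C A * X 2 ^ 2 with hf
  have hX2 : ∀ i : Fin 3, ((X i : MvPolynomial (Fin 3) k0) ^ 2).IsHomogeneous 2 := by
    intro i
    simpa using (isHomogeneous_X k0 i).pow 2
  have hXX : ((X 0 * X 1 : MvPolynomial (Fin 3) k0)).IsHomogeneous 2 := by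
    simpa using (isHomogeneous_X k0 (0 : Fin 3)).mul (isHomogeneous_X k0 1)
  have hhom : f.IsHomogeneous 2 := by
    refine IsHomogeneous.sub (IsHomogeneous.add (IsHomogeneous.add (hX2 0) ?_) ?_) ?_
    · simpa using (isHomogeneous_C _ S).mul hXX
    · simpa using (isHomogeneous_C _ N).mul (hX2 1)
    · simpa using (isHomogeneous_C _ A).mul (hX2 2)
  obtain ⟨x, hx0, hxne⟩ := hC1 3 2 f hhom (by norm_num) (by norm_num)
  -- translate evaluation into k
  have hfix' : ∀ c : k0, σ (c : k) = c := fun c => c.2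
  have heval : (x 0 : k) ^ 2 + (t + σ t) * ((x 0 : k) * x 1)
      + (t * σ t) * (x 1 : k) ^ 2 - a * (x 2 : k) ^ 2 = 0 := by
    have := congrArg (Subfield.subtype k0) hx0
    simpa [hf, hS, hN, hA] using this
  by_cases hz : (x 2 : k) = 0
  · -- then x1 ≠ 0 and σ t = t, contradiction
    exfalso
    have hx1 : (x 1 : k) ≠ 0 := by
      intro h1
      have h0 : (x 0 : k) = 0 := by
        have : (x 0 : k) ^ 2 = 0 := by rw [← heval]; rw [hz, h1]; ring
        exact pow_eq_zero_iff (n := 2) (by norm_num) |>.mp this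
      apply hxne
      funext i
      fin_cases i <;>
        [exact Subtype.ext h0; exact Subtype.ext h1; exact Subtype.ext hz]
    set r : k := -(x 0 : k) / (x 1 : k) with hr
    have hrfix : σ r = r := by
      simp [hr, map_div₀, map_neg, hfix']
    have key : (x 0 : k) ^ 2 + (t + σ t) * ((x 0 : k) * x 1)
        + (t * σ t) * (x 1 : k) ^ 2 = 0 := by
      linear_combination heval + a * (x 2 : k) * hz
    have hrx : r * (x 1 : k) + (x 0 : k) = 0 := by
      rw [hr]; field_simp; ring
    have h2 : (x 1 : k) ^ 2 * (r ^ 2 - (t + σ t) * r + t * σ t) = 0 := by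
      linear_combination key + ((r * (x 1 : k) - (x 0 : k)) - (t + σ t) * (x 1 : k)) * hrx
    have hroot : (r - t) * (r - σ t) = 0 := by
      have h3 := (mul_eq_zero.mp h2).resolve_left (pow_ne_zero 2 hx1)
      linear_combination h3
    rcases mul_eq_zero.mp hroot with h | h
    · exact ht (by rw [sub_eq_zero] at h; rw [← h, hrfix, h])
    · rw [sub_eq_zero] at h
      rw [h] at hrfix
      rw [hσ t] at hrfix
      exact ht hrfix.symm
  · refine ⟨((x 0 : k) + (x 1 : k) * t) / (x 2 : k), ?_⟩
    have hσl : σ (((x 0 : k) + (x 1 : k) * t) / (x 2 : k))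
        = ((x 0 : k) + (x 1 : k) * σ t) / (x 2 : k) := by
      simp [map_div₀, map_add, map_mul, hfix']
    rw [hσl, div_mul_div_comm]
    rw [div_eq_iff (by exact mul_ne_zero hz hz)]
    linear_combination heval
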